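/- Let Y be a discrete random variable, S a finite set of discrete random variables with Y ∉ S, and M₀ ⊆ S a Markov blanket of Y within S. For 0 < ε < 1, let S^ε be obtained from S by replacing each variable Z ∈ S \ M₀ by its ε-noise perturbation Z^ε (with mutually independent noise, jointly independent of all original variables and of Y). Then MI(S^ε, Y) = MI(S, Y); in particular, M₀ remains a Markov blanket of Y within S^ε, and if M₀ is a Markov boundary of Y within S then M₀ is a Markov boundary of Y within S^ε. -/
import Mathlib


open scoped BigOperators

noncomputable section

/-- `p` is a probability mass function on the finite type `Ω`. -/
def IsDist {Ω : Type*} [Fintype Ω] (p : Ω → ℝ) : Prop :=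
  (∀ w, 0 ≤ p w) ∧ ∑ w, p w = 1

/-- Total variation distance between two distributions on the same finite type. -/
def tvDist {Ω : Type*} [Fintype Ω] (p q : Ω → ℝ) : ℝ :=
  (∑ w, |p w - q w|) / 2

variable {ι : Type*} [Fintype ι] [DecidableEq ι]
variable {α : ι → Type*} [∀ i, Fintype (α i)] [∀ i, DecidableEq (α i)]

/-- Marginal probability, under joint pmf `p`, of the event that the variables in the
collection `A` take the values prescribed by the configuration `x`. -/
def margProb (p : (∀ i, α i) → ℝ) (A : Finset ι) (x : ∀ i, α i) : ℝ :=
  ∑ w : ∀ i, α i, if ∀ i ∈ A, w i = x i then p w else 0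

/-- Conditional independence of the collections `A` and `B` given the collection `C`:
`f(a, b | c) = f(a | c) f(b | c)` whenever `f(c) > 0` (stated in multiplied-out form). -/
def CondIndep (p : (∀ i, α i) → ℝ) (A B C : Finset ι) : Prop :=
  ∀ x : ∀ i, α i, 0 < margProb p C x →
    margProb p (A ∪ B ∪ C) x * margProb p C x =
      margProb p (A ∪ C) x * margProb p (B ∪ C) x

/-- `M` is a Markov blanket of the variable `y` within the collection `T`. -/
def MarkovBlanket (p : (∀ i, α i) → ℝ) (y : ι) (T M : Finset ι) : Prop :=
  M ⊆ T ∧ CondIndep p {y} (T \ M) M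

/-- `M` is a Markov boundary of `y` within `T`: a Markov blanket no proper subset of
which is a Markov blanket. -/
def MarkovBoundary (p : (∀ i, α i) → ℝ) (y : ι) (T M : Finset ι) : Prop :=
  MarkovBlanket p y T M ∧ ∀ M' ⊂ M, ¬ MarkovBlanket p y T M'

/-- Mutual information between the collections `A` and `B`
(with the convention `0 · log(junk) = 0` on zero-probability terms). -/
def MI (p : (∀ i, α i) → ℝ) (A B : Finset ι) : ℝ :=
  ∑ w : ∀ i, α i, p w *
    Real.log (margProb p (A ∪ B) w / (margProb p A w * margProb p B w))

/-- Conditional mutual information between collections `A` and `B` given `C`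
(with the convention `0 · log(junk) = 0` on zero-probability terms). -/
def CMI (p : (∀ i, α i) → ℝ) (A B C : Finset ι) : ℝ :=
  ∑ w : (∀ i, α i), p w *
    Real.log ((margProb p (A ∪ B ∪ C) w * margProb p C w) /
      (margProb p (A ∪ C) w * margProb p (B ∪ C) w))


/-- Joint pmf of the collection obtained by replacing, for each `i ∈ N`, the variable
`Z_i` by its ε-noise perturbation `Z_i^ε`: with probability `1 - ε` the perturbed
variable equals `Z_i` and otherwise it equals an independent noise variable with pmf
`q i`; the noise variables and Bernoulli(ε) switching indicators are mutually
independent and jointly independent of all the original variables. -/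
def perturb (p : (∀ i, α i) → ℝ) (N : Finset ι) (ε : ℝ) (q : ∀ i, α i → ℝ) :
    (∀ i, α i) → ℝ :=
  fun w => ∑ w₀ : ∀ i, α i, p w₀ *
    ∏ i : ι,
      if i ∈ N then (1 - ε) * (if w i = w₀ i then 1 else 0) + ε * q i (w i)
      else (if w i = w₀ i then 1 else 0)


variable [∀ i, Nonempty (α i)]

set_option linter.unusedSectionVars false

def kern (N : Finset ι) (ε : ℝ) (q : ∀ i, α i → ℝ) (i : ι) (a b : α i) : ℝ :=
  if i ∈ N then (1 - ε) * (if a = b then 1 else 0) + ε * q i a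
  else (if a = b then 1 else 0)

lemma perturb_apply (p : (∀ i, α i) → ℝ) (N : Finset ι) (ε : ℝ) (q : ∀ i, α i → ℝ)
    (w : ∀ i, α i) :
    perturb p N ε q w = ∑ w₀ : ∀ i, α i, p w₀ * ∏ i, kern N ε q i (w i) (w₀ i) := rfl

lemma sum_kern {N : Finset ι} {ε : ℝ} {q : ∀ i, α i → ℝ}
    (hq1 : ∀ i ∈ N, ∑ v, q i v = 1) (i : ι) (b : α i) :
    ∑ a, kern N ε q i a b = 1 := by
  unfold kern
  by_cases hi : i ∈ N
  · simp only [if_pos hi]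
    rw [Finset.sum_add_distrib, ← Finset.mul_sum, ← Finset.mul_sum, hq1 i hi]
    simp [Finset.sum_ite_eq']
  · simp [if_neg hi, Finset.sum_ite_eq']

lemma sum_prod_pi {κ : Type*} [Fintype κ] [DecidableEq κ] {β : κ → Type*}
    [∀ j, Fintype (β j)] (f : ∀ j, β j → ℝ) :
    ∑ w : ∀ j, β j, ∏ j, f j (w j) = ∏ j, ∑ a, f j a := by
  rw [Finset.prod_univ_sum]
  rw [Fintype.piFinset_univ]

set_option linter.unusedSectionVars false

lemma margProb_perturb {p : (∀ i, α i) → ℝ} {N : Finset ι} {ε : ℝ} {q : ∀ i, α i → ℝ}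
    (hq1 : ∀ i ∈ N, ∑ v, q i v = 1) {A : Finset ι} (x : ∀ i, α i) :
    margProb (perturb p N ε q) A x
      = ∑ w₀ : ∀ i, α i, p w₀ * ∏ i ∈ A, kern N ε q i (x i) (w₀ i) := by
  unfold margProb
  have h1 : ∀ w : ∀ i, α i, (if (∀ i ∈ A, w i = x i) then perturb p N ε q w else 0)
      = ∑ w₀ : ∀ i, α i, p w₀ *
          ((∏ i ∈ A, if w i = x i then (1:ℝ) else 0) * ∏ i, kern N ε q i (w i) (w₀ i)) := by
    intro w
    rw [perturb_apply]
    by_cases hc : ∀ i ∈ A, w i = x i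
    · rw [if_pos hc]
      refine Finset.sum_congr rfl fun w₀ _ => ?_
      rw [Finset.prod_boole, if_pos hc, one_mul]
    · rw [if_neg hc]
      symm
      refine Finset.sum_eq_zero fun w₀ _ => ?_
      rw [Finset.prod_boole, if_neg hc, zero_mul, mul_zero]
  simp_rw [h1]
  rw [Finset.sum_comm]
  refine Finset.sum_congr rfl fun w₀ _ => ?_
  rw [← Finset.mul_sum]
  congr 1
  have h2 : ∀ w : ∀ i, α i,
      (∏ i ∈ A, if w i = x i then (1:ℝ) else 0) * ∏ i, kern N ε q i (w i) (w₀ i)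
        = ∏ i, ((if i ∈ A then (if w i = x i then (1:ℝ) else 0) else 1)
            * kern N ε q i (w i) (w₀ i)) := by
    intro w
    rw [Finset.prod_mul_distrib]
    congr 1
    rw [Finset.prod_ite_mem, Finset.univ_inter]
  simp_rw [h2]
  rw [sum_prod_pi (fun i a => (if i ∈ A then (if a = x i then (1:ℝ) else 0) else 1)
        * kern N ε q i a (w₀ i))]
  have h3 : ∀ i, (∑ a, (if i ∈ A then (if a = x i then (1:ℝ) else 0) else 1)
        * kern N ε q i a (w₀ i))
      = if i ∈ A then kern N ε q i (x i) (w₀ i) else 1 := by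
    intro i
    by_cases hi : i ∈ A
    · simp only [if_pos hi, ite_mul, one_mul, zero_mul]
      rw [Finset.sum_ite_eq']
      simp
    · simp only [if_neg hi, one_mul]
      exact sum_kern hq1 i (w₀ i)
  simp_rw [h3]
  rw [Finset.prod_ite_mem, Finset.univ_inter]

lemma margProb_perturb_of_disjoint {p : (∀ i, α i) → ℝ} {N : Finset ι} {ε : ℝ}
    {q : ∀ i, α i → ℝ} (hq1 : ∀ i ∈ N, ∑ v, q i v = 1) {A : Finset ι}
    (hA : ∀ i ∈ A, i ∉ N) (x : ∀ i, α i) :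
    margProb (perturb p N ε q) A x = margProb p A x := by
  rw [margProb_perturb hq1]
  unfold margProb
  refine Finset.sum_congr rfl fun w₀ _ => ?_
  have h : (∏ i ∈ A, kern N ε q i (x i) (w₀ i))
      = ∏ i ∈ A, if w₀ i = x i then (1:ℝ) else 0 := by
    refine Finset.prod_congr rfl fun i hi => ?_
    unfold kern
    rw [if_neg (hA i hi)]
    simp [eq_comm]
  rw [h, Finset.prod_boole, mul_ite, mul_one, mul_zero]
  simp

def patch (N : Finset ι) (x : ∀ i, α i) (v : ∀ i : N, α i.1) : ∀ i, α i :=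
  fun i => if h : i ∈ N then v ⟨i, h⟩ else x i

def restr (N : Finset ι) (x : ∀ i, α i) : ∀ i : N, α i.1 := fun i => x i.1

def psi (N : Finset ι) (ε : ℝ) (q : ∀ i, α i → ℝ) (z v : ∀ i : N, α i.1) : ℝ :=
  ∏ i : N, ((1 - ε) * (if z i = v i then 1 else 0) + ε * q i.1 (z i))

lemma patch_restr (N : Finset ι) (x : ∀ i, α i) : patch N x (restr N x) = x := by
  funext i
  unfold patch restr
  split <;> rfl

lemma restr_patch (N : Finset ι) (x : ∀ i, α i) (v : ∀ i : N, α i.1) :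
    restr N (patch N x v) = v := by
  funext i
  show (if h : i.1 ∈ N then v ⟨i.1, h⟩ else x i.1) = v i
  rw [dif_pos i.2]

lemma patch_patch (N : Finset ι) (x : ∀ i, α i) (z v : ∀ i : N, α i.1) :
    patch N (patch N x z) v = patch N x v := by
  funext i
  unfold patch
  by_cases h : i ∈ N <;> simp [h]

lemma patch_apply_not_mem {N : Finset ι} {i : ι} (h : i ∉ N) (x : ∀ i, α i)
    (v : ∀ i : N, α i.1) : patch N x v i = x i := dif_neg h

lemma margProb_congr {p : (∀ i, α i) → ℝ} {A : Finset ι} {x x' : ∀ i, α i}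
    (h : ∀ i ∈ A, x i = x' i) : margProb p A x = margProb p A x' := by
  unfold margProb
  refine Finset.sum_congr rfl fun w _ => ?_
  refine if_congr ?_ rfl rfl
  constructor <;> intro hc i hi
  · rw [← h i hi]; exact hc i hi
  · rw [h i hi]; exact hc i hi

lemma margProb_perturb_of_subset {p : (∀ i, α i) → ℝ} {N : Finset ι} {ε : ℝ}
    {q : ∀ i, α i → ℝ} (hq1 : ∀ i ∈ N, ∑ v, q i v = 1) {A : Finset ι}
    (hNA : N ⊆ A) (x : ∀ i, α i) :
    margProb (perturb p N ε q) A x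
      = ∑ v : ∀ i : N, α i.1, margProb p A (patch N x v) * psi N ε q (restr N x) v := by
  have hpsi : ∀ w₀ : ∀ i, α i, psi N ε q (restr N x) (restr N w₀)
      = ∏ i ∈ N, ((1 - ε) * (if x i = w₀ i then (1:ℝ) else 0) + ε * q i (x i)) := by
    intro w₀
    unfold psi restr
    rw [Finset.univ_eq_attach]
    exact Finset.prod_attach N fun i =>
      ((1 - ε) * (if x i = w₀ i then (1:ℝ) else 0) + ε * q i (x i))
  rw [margProb_perturb hq1]
  have hsplit : ∀ w₀ : ∀ i, α i,
      (∏ i ∈ A, kern N ε q i (x i) (w₀ i))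
        = (if ∀ i ∈ A \ N, w₀ i = x i then (1:ℝ) else 0)
            * psi N ε q (restr N x) (restr N w₀) := by
    intro w₀
    rw [hpsi]
    have hAe : A = (A \ N) ∪ N := (Finset.sdiff_union_of_subset hNA).symm
    conv_lhs => rw [hAe]
    rw [Finset.prod_union Finset.sdiff_disjoint]
    congr 1
    · calc ∏ i ∈ A \ N, kern N ε q i (x i) (w₀ i)
          = ∏ i ∈ A \ N, if w₀ i = x i then (1:ℝ) else 0 := by
            refine Finset.prod_congr rfl fun i hi => ?_
            unfold kern
            rw [if_neg (Finset.mem_sdiff.mp hi).2]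
            simp [eq_comm]
        _ = _ := by rw [Finset.prod_boole]; simp
    · refine Finset.prod_congr rfl fun i hi => ?_
      unfold kern
      rw [if_pos hi]
  simp_rw [hsplit]
  have hcond : ∀ (w₀ : ∀ i, α i) (v : ∀ i : N, α i.1),
      (∀ i ∈ A, w₀ i = patch N x v i) ↔ ((∀ i ∈ A \ N, w₀ i = x i) ∧ restr N w₀ = v) := by
    intro w₀ v
    constructor
    · intro hc
      refine ⟨fun i hi => ?_, funext fun i => ?_⟩
      · have h := hc i (Finset.mem_sdiff.mp hi).1
        rwa [patch_apply_not_mem (Finset.mem_sdiff.mp hi).2] at h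
      · have h := hc i.1 (hNA i.2)
        show w₀ i.1 = v i
        rw [h]
        show (if h : i.1 ∈ N then v ⟨i.1, h⟩ else x i.1) = v i
        rw [dif_pos i.2]
    · rintro ⟨h1, h2⟩ i hi
      by_cases hiN : i ∈ N
      · show w₀ i = (if h : i ∈ N then v ⟨i, h⟩ else x i)
        rw [dif_pos hiN, ← h2]
        rfl
      · rw [patch_apply_not_mem hiN]
        exact h1 i (Finset.mem_sdiff.mpr ⟨hi, hiN⟩)
  have hRHS : ∀ v : ∀ i : N, α i.1, margProb p A (patch N x v) * psi N ε q (restr N x) v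
      = ∑ w₀ : ∀ i, α i, (if (∀ i ∈ A \ N, w₀ i = x i) ∧ restr N w₀ = v
          then p w₀ * psi N ε q (restr N x) v else 0) := by
    intro v
    unfold margProb
    rw [Finset.sum_mul]
    refine Finset.sum_congr rfl fun w₀ _ => ?_
    by_cases h : (∀ i ∈ A \ N, w₀ i = x i) ∧ restr N w₀ = v
    · rw [if_pos h, if_pos ((hcond w₀ v).mpr h)]
    · rw [if_neg h, if_neg (fun hc => h ((hcond w₀ v).mp hc)), zero_mul]
  simp_rw [hRHS]
  rw [Finset.sum_comm]
  refine Finset.sum_congr rfl fun w₀ _ => ?_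
  by_cases hc : ∀ i ∈ A \ N, w₀ i = x i
  · rw [if_pos hc, one_mul]
    have hv : ∀ v : ∀ i : N, α i.1,
        (if (∀ i ∈ A \ N, w₀ i = x i) ∧ restr N w₀ = v
            then p w₀ * psi N ε q (restr N x) v else 0)
          = if restr N w₀ = v then p w₀ * psi N ε q (restr N x) v else 0 := by
      intro v
      by_cases hvv : restr N w₀ = v
      · rw [if_pos ⟨hc, hvv⟩, if_pos hvv]
      · rw [if_neg (fun h => hvv h.2), if_neg hvv]
    simp_rw [hv]
    rw [Finset.sum_ite_eq]
    simp
  · rw [if_neg hc, zero_mul, mul_zero]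
    symm
    exact Finset.sum_eq_zero fun v _ => if_neg (fun h => hc h.1)

lemma kern_inv {ε : ℝ} (hε : (1:ℝ) - ε ≠ 0) {β : Type*} [Fintype β] [DecidableEq β]
    {r : β → ℝ} (hr : ∑ v, r v = 1) (t b : β) :
    ∑ a, (1/(1-ε) * ((if t = a then (1:ℝ) else 0) - ε * r t)) *
        ((1-ε) * (if a = b then 1 else 0) + ε * r a)
      = if t = b then 1 else 0 := by
  have key : ∀ a : β,
      (1/(1-ε) * ((if t = a then (1:ℝ) else 0) - ε * r t)) *
          ((1-ε) * (if a = b then 1 else 0) + ε * r a)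
        = 1/(1-ε) * (((1-ε) * ((if t = a then (1:ℝ) else 0) * (if a = b then (1:ℝ) else 0))
            + ε * ((if t = a then (1:ℝ) else 0) * r a))
          - ((ε * (1-ε) * r t) * (if a = b then (1:ℝ) else 0) + (ε * ε * r t) * r a)) := by
    intro a
    ring
  simp_rw [key, ← Finset.mul_sum, Finset.sum_sub_distrib, Finset.sum_add_distrib]
  rw [← Finset.mul_sum, ← Finset.mul_sum, ← Finset.mul_sum, ← Finset.mul_sum]
  have e1 : ∑ a, (if t = a then (1:ℝ) else 0) * (if a = b then (1:ℝ) else 0)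
      = if t = b then 1 else 0 := by
    simp_rw [boole_mul]
    rw [Finset.sum_ite_eq]
    simp
  have e2 : ∑ a, (if t = a then (1:ℝ) else 0) * r a = r t := by
    simp_rw [boole_mul]
    rw [Finset.sum_ite_eq]
    simp
  have e3 : ∑ a, (if a = b then (1:ℝ) else 0) = 1 := by
    rw [Finset.sum_ite_eq']
    simp
  rw [e1, e2, e3, hr]
  field_simp
  ring

lemma deconv {N : Finset ι} {ε : ℝ} {q : ∀ i, α i → ℝ} (hε : (1:ℝ) - ε ≠ 0)
    (hq1 : ∀ i ∈ N, ∑ v, q i v = 1)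
    (h : (∀ i : N, α i.1) → ℝ)
    (hh : ∀ z : ∀ i : N, α i.1, ∑ v : ∀ i : N, α i.1, h v * psi N ε q z v = 0)
    (t : ∀ i : N, α i.1) : h t = 0 := by
  have key : ∀ v : ∀ i : N, α i.1,
      (if t = v then (1:ℝ) else 0)
        = ∑ z : ∀ i : N, α i.1,
            (∏ i : N, (1/(1-ε) * ((if t i = z i then (1:ℝ) else 0) - ε * q i.1 (t i))))
              * psi N ε q z v := by
    intro v
    have e1 : ∀ z : ∀ i : N, α i.1,
        (∏ i : N, (1/(1-ε) * ((if t i = z i then (1:ℝ) else 0) - ε * q i.1 (t i))))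
            * psi N ε q z v
          = ∏ i : N, ((1/(1-ε) * ((if t i = z i then (1:ℝ) else 0) - ε * q i.1 (t i)))
              * ((1-ε) * (if z i = v i then 1 else 0) + ε * q i.1 (z i))) := by
      intro z
      unfold psi
      rw [← Finset.prod_mul_distrib]
    simp_rw [e1]
    rw [sum_prod_pi (fun (i : N) a =>
      (1/(1-ε) * ((if t i = a then (1:ℝ) else 0) - ε * q i.1 (t i)))
        * ((1-ε) * (if a = v i then 1 else 0) + ε * q i.1 a))]
    have e2 : ∀ i : N, (∑ a, (1/(1-ε) * ((if t i = a then (1:ℝ) else 0) - ε * q i.1 (t i)))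
          * ((1-ε) * (if a = v i then 1 else 0) + ε * q i.1 a)) = if t i = v i then 1 else 0 :=
      fun i => kern_inv hε (hq1 i.1 i.2) (t i) (v i)
    simp_rw [e2]
    rw [Finset.prod_boole]
    by_cases hv : t = v
    · subst hv; simp
    · rw [if_neg hv, if_neg (fun hc => hv (funext fun i => hc i (Finset.mem_univ i)))]
  have e0 : h t = ∑ v : ∀ i : N, α i.1, h v * (if t = v then (1:ℝ) else 0) := by
    simp_rw [mul_boole]
    rw [Finset.sum_ite_eq]
    simp
  rw [e0]
  simp_rw [key, Finset.mul_sum]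
  rw [Finset.sum_comm]
  have e3 : ∀ (z v : ∀ i : N, α i.1),
      h v * ((∏ i : N, (1/(1-ε) * ((if t i = z i then (1:ℝ) else 0) - ε * q i.1 (t i))))
          * psi N ε q z v)
        = (∏ i : N, (1/(1-ε) * ((if t i = z i then (1:ℝ) else 0) - ε * q i.1 (t i))))
            * (h v * psi N ε q z v) := by
    intro z v
    ring
  simp_rw [e3, ← Finset.mul_sum]
  simp_rw [hh, mul_zero]
  exact Finset.sum_const_zero

lemma sum_perturb_mul {p : (∀ i, α i) → ℝ} {N : Finset ι} {ε : ℝ} {q : ∀ i, α i → ℝ}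
    (hq1 : ∀ i ∈ N, ∑ v, q i v = 1) {A : Finset ι}
    (G : (∀ i, α i) → ℝ) (hA : ∀ i ∈ A, i ∉ N)
    (hG : ∀ w w', (∀ i ∈ A, w i = w' i) → G w = G w') :
    ∑ w, perturb p N ε q w * G w = ∑ w, p w * G w := by
  simp_rw [perturb_apply, Finset.sum_mul]
  rw [Finset.sum_comm]
  refine Finset.sum_congr rfl fun w₀ _ => ?_
  have step : ∀ w : ∀ i, α i, (p w₀ * ∏ i, kern N ε q i (w i) (w₀ i)) * G w
      = p w₀ * ((∏ i, kern N ε q i (w i) (w₀ i)) * G w₀) := by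
    intro w
    by_cases hz : (∏ i, kern N ε q i (w i) (w₀ i)) = 0
    · rw [hz]
      ring
    · have heq : G w = G w₀ := by
        refine hG w w₀ fun i hi => ?_
        have hne := (Finset.prod_ne_zero_iff.mp hz) i (Finset.mem_univ i)
        unfold kern at hne
        rw [if_neg (hA i hi)] at hne
        by_contra hne2
        rw [if_neg hne2] at hne
        exact hne rfl
      rw [heq]
      ring
  simp_rw [step, ← Finset.mul_sum, ← Finset.sum_mul]
  have hone : ∑ w : ∀ i, α i, ∏ i, kern N ε q i (w i) (w₀ i) = 1 := by
    rw [sum_prod_pi (fun i a => kern N ε q i a (w₀ i))]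
    rw [Finset.prod_congr rfl fun i _ => sum_kern hq1 i (w₀ i)]
    exact Finset.prod_const_one
  rw [hone, one_mul]

lemma margProb_pos {p : (∀ i, α i) → ℝ} (hp0 : ∀ w, 0 ≤ p w) {w : ∀ i, α i}
    (hw : 0 < p w) (A : Finset ι) : 0 < margProb p A w := by
  unfold margProb
  refine Finset.sum_pos' (fun w' _ => ?_) ⟨w, Finset.mem_univ w, ?_⟩
  · split
    · exact hp0 w'
    · exact le_refl 0
  · rw [if_pos (fun i _ => rfl)]
    exact hw

lemma perturb_nonneg {p : (∀ i, α i) → ℝ} {N : Finset ι} {ε : ℝ} {q : ∀ i, α i → ℝ}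
    (hp0 : ∀ w, 0 ≤ p w) (hε0 : 0 ≤ ε) (hε1 : ε ≤ 1)
    (hq0 : ∀ i ∈ N, ∀ v, 0 ≤ q i v) (w : ∀ i, α i) : 0 ≤ perturb p N ε q w := by
  rw [perturb_apply]
  refine Finset.sum_nonneg fun w₀ _ =>
    mul_nonneg (hp0 w₀) (Finset.prod_nonneg fun i _ => ?_)
  unfold kern
  by_cases hi : i ∈ N
  · rw [if_pos hi]
    refine add_nonneg (mul_nonneg (by linarith) ?_) (mul_nonneg hε0 (hq0 i hi _))
    split <;> norm_num
  · rw [if_neg hi]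
    split <;> norm_num

lemma chain_rule {p : (∀ i, α i) → ℝ} (hp0 : ∀ w, 0 ≤ p w) {y : ι} {S M : Finset ι}
    (hMS : M ⊆ S) :
    MI p S {y} = MI p M {y} + CMI p (S \ M) {y} M := by
  unfold MI CMI
  rw [← Finset.sum_add_distrib]
  refine Finset.sum_congr rfl fun w _ => ?_
  rcases eq_or_lt_of_le (hp0 w) with h0 | hpos
  · rw [← h0, zero_mul, zero_mul, zero_mul, zero_add]
  · rw [← mul_add]
    congr 1
    have e2 : S \ M ∪ M = S := Finset.sdiff_union_of_subset hMS
    have e1 : S \ M ∪ {y} ∪ M = S ∪ {y} := by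
      rw [Finset.union_right_comm, e2]
    have e3 : ({y} : Finset ι) ∪ M = M ∪ {y} := Finset.union_comm _ _
    rw [e1, e2, e3]
    have ha := margProb_pos hp0 hpos (S ∪ {y})
    have hb := margProb_pos hp0 hpos S
    have hc := margProb_pos hp0 hpos ({y} : Finset ι)
    have hd := margProb_pos hp0 hpos (M ∪ {y})
    have hm := margProb_pos hp0 hpos M
    rw [Real.log_div ha.ne' (mul_pos hb hc).ne', Real.log_mul hb.ne' hc.ne',
      Real.log_div hd.ne' (mul_pos hm hc).ne', Real.log_mul hm.ne' hc.ne',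
      Real.log_div (mul_pos ha hm).ne' (mul_pos hb hd).ne',
      Real.log_mul ha.ne' hm.ne', Real.log_mul hb.ne' hd.ne']
    ring

lemma cmi_zero {p : (∀ i, α i) → ℝ} (hp0 : ∀ w, 0 ≤ p w) {y : ι} {B C : Finset ι}
    (hCI : CondIndep p {y} B C) : CMI p B {y} C = 0 := by
  unfold CMI
  refine Finset.sum_eq_zero fun w _ => ?_
  rcases eq_or_lt_of_le (hp0 w) with h0 | hpos
  · rw [← h0, zero_mul]
  · have hc := margProb_pos hp0 hpos C
    have h := hCI w hc
    rw [show B ∪ {y} ∪ C = {y} ∪ B ∪ C from by rw [Finset.union_comm B {y}], h,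
      mul_comm (margProb p ({y} ∪ C) w) (margProb p (B ∪ C) w),
      div_self (mul_pos (margProb_pos hp0 hpos (B ∪ C))
        (margProb_pos hp0 hpos ({y} ∪ C))).ne', Real.log_one, mul_zero]

lemma condIndep_perturb_forward {p : (∀ i, α i) → ℝ} {ε : ℝ} {q : ∀ i, α i → ℝ}
    {y : ι} {S M : Finset ι}
    (hq1 : ∀ i ∈ S \ M, ∑ v, q i v = 1) (hMS : M ⊆ S) (hyS : y ∉ S)
    (hCI : CondIndep p {y} (S \ M) M) :
    CondIndep (perturb p (S \ M) ε q) {y} (S \ M) M := by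
  intro x hx
  have hU2 : S \ M ∪ M = S := Finset.sdiff_union_of_subset hMS
  have hU1 : {y} ∪ (S \ M) ∪ M = {y} ∪ S := by rw [Finset.union_assoc, hU2]
  have hdisjM : ∀ i ∈ M, i ∉ S \ M := fun i hi hmem => (Finset.mem_sdiff.mp hmem).2 hi
  have hdisjyM : ∀ i ∈ ({y} ∪ M : Finset ι), i ∉ S \ M := by
    intro i hi hmem
    rcases Finset.mem_union.mp hi with h | h
    · rw [Finset.mem_singleton] at h
      exact hyS (h ▸ (Finset.mem_sdiff.mp hmem).1)
    · exact (Finset.mem_sdiff.mp hmem).2 h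
  rw [margProb_perturb_of_disjoint hq1 hdisjM] at hx
  rw [hU1, hU2,
    margProb_perturb_of_disjoint hq1 hdisjM,
    margProb_perturb_of_disjoint hq1 hdisjyM,
    margProb_perturb_of_subset hq1 (show S \ M ⊆ {y} ∪ S from
      Finset.sdiff_subset.trans Finset.subset_union_right),
    margProb_perturb_of_subset hq1 (show S \ M ⊆ S from Finset.sdiff_subset)]
  rw [Finset.sum_mul, Finset.mul_sum]
  refine Finset.sum_congr rfl fun v _ => ?_
  have hpm : ∀ (B : Finset ι), (∀ i ∈ B, i ∉ S \ M) →
      margProb p B (patch (S \ M) x v) = margProb p B x := fun B hB =>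
    margProb_congr fun i hi => patch_apply_not_mem (hB i hi) x v
  have h1 := hCI (patch (S \ M) x v) (by rw [hpm M hdisjM]; exact hx)
  rw [hU1, hU2, hpm M hdisjM, hpm ({y} ∪ M) hdisjyM] at h1
  linear_combination psi (S \ M) ε q (restr (S \ M) x) v * h1

lemma condIndep_perturb_reverse {p : (∀ i, α i) → ℝ} {ε : ℝ} {q : ∀ i, α i → ℝ}
    {y : ι} {S M₀ M' : Finset ι} (hε : (1:ℝ) - ε ≠ 0)
    (hq1 : ∀ i ∈ S \ M₀, ∑ v, q i v = 1)
    (hM'M : M' ⊆ M₀) (hM₀S : M₀ ⊆ S) (hyS : y ∉ S)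
    (hCI : CondIndep (perturb p (S \ M₀) ε q) {y} (S \ M') M') :
    CondIndep p {y} (S \ M') M' := by
  intro x hx
  have hM'S : M' ⊆ S := hM'M.trans hM₀S
  have hU2 : S \ M' ∪ M' = S := Finset.sdiff_union_of_subset hM'S
  have hU1 : {y} ∪ (S \ M') ∪ M' = {y} ∪ S := by rw [Finset.union_assoc, hU2]
  have hdisjM : ∀ i ∈ M', i ∉ S \ M₀ := fun i hi hmem =>
    (Finset.mem_sdiff.mp hmem).2 (hM'M hi)
  have hdisjyM : ∀ i ∈ ({y} ∪ M' : Finset ι), i ∉ S \ M₀ := by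
    intro i hi hmem
    rcases Finset.mem_union.mp hi with h | h
    · rw [Finset.mem_singleton] at h
      exact hyS (h ▸ (Finset.mem_sdiff.mp hmem).1)
    · exact (Finset.mem_sdiff.mp hmem).2 (hM'M h)
  have hNS : S \ M₀ ⊆ S := Finset.sdiff_subset
  have hNyS : S \ M₀ ⊆ {y} ∪ S := hNS.trans Finset.subset_union_right
  set N : Finset ι := S \ M₀ with hN
  set h : (∀ i : N, α i.1) → ℝ := fun v =>
    margProb p ({y} ∪ S) (patch N x v) * margProb p M' x
      - margProb p ({y} ∪ M') x * margProb p S (patch N x v) with hh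
  have hpm : ∀ (B : Finset ι), (∀ i ∈ B, i ∉ N) → ∀ (z : ∀ i : N, α i.1),
      margProb p B (patch N x z) = margProb p B x := fun B hB z =>
    margProb_congr fun i hi => patch_apply_not_mem (hB i hi) x z
  have hzero : ∀ z : ∀ i : N, α i.1, ∑ v : ∀ i : N, α i.1, h v * psi N ε q z v = 0 := by
    intro z
    have hx' : 0 < margProb (perturb p N ε q) M' (patch N x z) := by
      rw [margProb_perturb_of_disjoint hq1 hdisjM, hpm M' hdisjM z]
      exact hx
    have h2 := hCI (patch N x z) hx'
    rw [hU1, hU2,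
      margProb_perturb_of_disjoint hq1 hdisjM,
      margProb_perturb_of_disjoint hq1 hdisjyM,
      margProb_perturb_of_subset hq1 hNyS,
      margProb_perturb_of_subset hq1 hNS,
      restr_patch, hpm M' hdisjM z, hpm ({y} ∪ M') hdisjyM z] at h2
    simp_rw [patch_patch] at h2
    have e3 : ∀ v : ∀ i : N, α i.1, h v * psi N ε q z v
        = (margProb p ({y} ∪ S) (patch N x v) * psi N ε q z v) * margProb p M' x
          - margProb p ({y} ∪ M') x * (margProb p S (patch N x v) * psi N ε q z v) := by
      intro v
      rw [hh]
      ring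
    simp_rw [e3]
    rw [Finset.sum_sub_distrib, ← Finset.sum_mul, ← Finset.mul_sum, h2, sub_self]
  have hfin := deconv hε hq1 h hzero (restr N x)
  rw [hh] at hfin
  simp only [patch_restr] at hfin
  rw [hU1, hU2]
  linarith [hfin]

lemma MI_perturb_eq {p : (∀ i, α i) → ℝ} {N : Finset ι} {ε : ℝ} {q : ∀ i, α i → ℝ}
    (hq1 : ∀ i ∈ N, ∑ v, q i v = 1) {y : ι} {M : Finset ι}
    (hA : ∀ i ∈ M ∪ ({y} : Finset ι), i ∉ N) :
    MI (perturb p N ε q) M {y} = MI p M {y} := by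
  unfold MI
  have hM : ∀ i ∈ M, i ∉ N := fun i hi => hA i (Finset.mem_union_left _ hi)
  have hy : ∀ i ∈ ({y} : Finset ι), i ∉ N := fun i hi => hA i (Finset.mem_union_right _ hi)
  have e : ∀ w : ∀ i, α i,
      margProb (perturb p N ε q) (M ∪ {y}) w
          / (margProb (perturb p N ε q) M w * margProb (perturb p N ε q) {y} w)
        = margProb p (M ∪ {y}) w / (margProb p M w * margProb p {y} w) := by
    intro w
    rw [margProb_perturb_of_disjoint hq1 hA,
      margProb_perturb_of_disjoint hq1 hM,
      margProb_perturb_of_disjoint hq1 hy]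
  simp_rw [e]
  refine sum_perturb_mul hq1 _ hA fun w w' hww => ?_
  rw [margProb_congr (A := M ∪ {y}) (fun i hi => hww i hi),
    margProb_congr (A := M) (fun i hi => hww i (Finset.mem_union_left _ hi)),
    margProb_congr (A := ({y} : Finset ι)) (fun i hi => hww i (Finset.mem_union_right _ hi))]


/-- if `M₀` is a Markov blanket of `Y` within `S`, then after adding
ε-noise (`0 < ε < 1`, noise pmfs everywhere positive) to every variable in `S \ M₀`,
the mutual information is preserved: `MI(S^ε, Y) = MI(S, Y)`; in particular `M₀` remains
a Markov blanket, and if `M₀` was a Markov boundary it remains one. -/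
theorem mutual_information_preserved_after_noise_outside_blanket
    (p : (∀ i, α i) → ℝ) (hp : IsDist p)
    (y : ι) (S : Finset ι) (hyS : y ∉ S)
    (M₀ : Finset ι) (hM₀ : MarkovBlanket p y S M₀)
    (ε : ℝ) (hε0 : 0 < ε) (hε1 : ε < 1)
    (q : ∀ i, α i → ℝ) (hq : ∀ i ∈ S \ M₀, (∀ v, 0 < q i v) ∧ ∑ v, q i v = 1) :
    MI (perturb p (S \ M₀) ε q) S {y} = MI p S {y} ∧
      MarkovBlanket (perturb p (S \ M₀) ε q) y S M₀ ∧
      (MarkovBoundary p y S M₀ → MarkovBoundary (perturb p (S \ M₀) ε q) y S M₀) := by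
  obtain ⟨hM₀S, hCI⟩ := hM₀
  have hq1 : ∀ i ∈ S \ M₀, ∑ v, q i v = 1 := fun i hi => (hq i hi).2
  have hq0 : ∀ i ∈ S \ M₀, ∀ v, 0 ≤ q i v := fun i hi v => ((hq i hi).1 v).le
  have hp0 := hp.1
  have hp'0 := perturb_nonneg (q := q) hp0 hε0.le hε1.le hq0
  have hCI' := condIndep_perturb_forward (ε := ε) hq1 hM₀S hyS hCI
  have hA : ∀ i ∈ M₀ ∪ ({y} : Finset ι), i ∉ S \ M₀ := by
    intro i hi hmem
    rcases Finset.mem_union.mp hi with h | h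
    · exact (Finset.mem_sdiff.mp hmem).2 h
    · rw [Finset.mem_singleton] at h
      exact hyS (h ▸ (Finset.mem_sdiff.mp hmem).1)
  have hMIeq : MI (perturb p (S \ M₀) ε q) S {y} = MI p S {y} := by
    rw [chain_rule hp'0 hM₀S, chain_rule hp0 hM₀S,
      cmi_zero hp'0 hCI', cmi_zero hp0 hCI, MI_perturb_eq hq1 hA]
  refine ⟨hMIeq, ⟨hM₀S, hCI'⟩, ?_⟩
  rintro ⟨_, hbd⟩
  refine ⟨⟨hM₀S, hCI'⟩, fun M' hM' hbl' => ?_⟩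
  exact hbd M' hM' ⟨hbl'.1,
    condIndep_perturb_reverse (ne_of_gt (by linarith)) hq1 hM'.subset hM₀S hyS hbl'.2⟩

end
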